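/- The hereditary closure of hypercube graphs has unbounded functionality: for every k there exists n such that in the n-dimensional hypercube Q_n, no vertex is a function of k other vertices. -/

import Mathlib

open Finset
open scoped Classical

variable {V : Type*}

/-- A vertex `x` is a function of a set `S` of other vertices: there is a Boolean
function `f` such that for every vertex `z` outside `S ∪ {x}`, adjacency of `z`
to `x` is `f` of the adjacencies of `z` to the members of `S`. -/
def IsFunctionOf (G : SimpleGraph V) (x : V) (S : Finset V) : Prop :=
  x ∉ S ∧ ∃ f : (S → Prop) → Prop,
    ∀ z, z ≠ x → z ∉ S → (G.Adj x z ↔ f fun s => G.Adj z s)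

/-- The functionality of a vertex: minimum `k` such that `x` is a function of
`k` other vertices. -/
noncomputable def funVertex [Fintype V] (G : SimpleGraph V) (x : V) : ℕ :=
  sInf {k | ∃ S : Finset V, S.card = k ∧ IsFunctionOf G x S}

/-- `sdPair G x y`: the number of vertices other than `x, y` adjacent to exactly
one of `x` and `y`. -/
noncomputable def sdPair [Fintype V] (G : SimpleGraph V) (x y : V) : ℕ :=
  (univ.filter fun z => z ≠ x ∧ z ≠ y ∧ ¬(G.Adj z x ↔ G.Adj z y)).card


/-- The `n`-dimensional hypercube: vertices are `{0,1}^n`, adjacent iff they differ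
in exactly one coordinate. -/
def cubeGraph (n : ℕ) : SimpleGraph (Fin n → Bool) where
  Adj x y := (univ.filter fun i => x i ≠ y i).card = 1
  symm := by
    constructor
    intro x y h
    simpa [ne_comm] using h
  loopless := by
    constructor
    intro x h
    simp at h

/-- The hereditary closure of hypercubes has unbounded functionality: for every `k`
there is `n` such that in `Q_n` no vertex is a function of at most `k` other
vertices. -/
lemma flip_filter {n : ℕ} (y s : Fin n → Bool) (i : Fin n) :
    (univ.filter fun t => (if t = i then !y t else y t) ≠ s t)
      = if y i = s i then insert i (univ.filter fun t => y t ≠ s t)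
        else (univ.filter fun t => y t ≠ s t).erase i := by
  ext t
  by_cases ht : t = i
  · subst ht
    by_cases h : y t = s t <;> simp [h]
  · by_cases h : y i = s i <;> simp [ht, h]

lemma flip_card {n : ℕ} (y s : Fin n → Bool) (i : Fin n) :
    (univ.filter fun t => (if t = i then !y t else y t) ≠ s t).card
      = if y i = s i then (univ.filter fun t => y t ≠ s t).card + 1
        else (univ.filter fun t => y t ≠ s t).card - 1 := by
  rw [flip_filter]
  by_cases h : y i = s i
  · rw [if_pos h, if_pos h, card_insert_of_notMem (by simp [h])]
  · rw [if_neg h, if_neg h, card_erase_of_mem (by simp [h])]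

theorem hypercube_unbounded_functionality :
    ∀ k : ℕ, ∃ n : ℕ, ∀ x : Fin n → Bool, ∀ S : Finset (Fin n → Bool),
      S.card ≤ k → ¬ IsFunctionOf (cubeGraph n) x S := by
  intro k
  refine ⟨3 * k + 2, ?_⟩
  intro x S hScard hFun
  obtain ⟨hxS, f, hf⟩ := hFun
  set D : (Fin (3*k+2) → Bool) → Finset (Fin (3*k+2)) := fun s => univ.filter fun t => x t ≠ s t with hD
  set B := S.biUnion (fun s => if (D s).card ≤ 3 then D s else ∅) with hB
  have hBcard : B.card ≤ 3 * k := by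
    calc B.card ≤ ∑ s ∈ S, (if (D s).card ≤ 3 then D s else ∅).card := card_biUnion_le
    _ ≤ ∑ _s ∈ S, 3 := by
        refine sum_le_sum ?_
        intro s _
        split
        · omega
        · simp
    _ = 3 * S.card := by rw [sum_const, smul_eq_mul, mul_comm]
    _ ≤ 3 * k := by omega
  have hcompl : 1 < (univ \ B).card := by
    have h1 : (univ \ B).card = 3*k+2 - B.card := by
      rw [card_sdiff_of_subset (subset_univ B), card_univ, Fintype.card_fin]
    omega
  obtain ⟨i, hi, j, hj, hij⟩ := one_lt_card.mp hcompl
  have hiB : i ∉ B := (mem_sdiff.mp hi).2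
  have hjB : j ∉ B := (mem_sdiff.mp hj).2
  -- key facts about each s ∈ S
  have hDpos : ∀ s ∈ S, 1 ≤ (D s).card := by
    intro s hs
    rcases Nat.eq_zero_or_pos (D s).card with h | h
    · exfalso
      apply hxS
      have hempty : D s = ∅ := card_eq_zero.mp h
      have : x = s := by
        funext t
        by_contra ht
        have : t ∈ D s := by simp [hD, ht]
        simp [hempty] at this
      exact this ▸ hs
    · exact h
  have hsmall : ∀ s ∈ S, (D s).card ≤ 3 → x i = s i ∧ x j = s j := by
    intro s hs h3
    constructor
    · by_contra hne
      apply hiB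
      rw [hB, mem_biUnion]
      exact ⟨s, hs, by rw [if_pos h3]; simp [hD, hne]⟩
    · by_contra hne
      apply hjB
      rw [hB, mem_biUnion]
      exact ⟨s, hs, by rw [if_pos h3]; simp [hD, hne]⟩
  set z := fun t => if t = i then !x t else x t with hz
  set z' := fun t => if t = j then !z t else z t with hz'
  have hji : ¬ (j = i) := fun h => hij h.symm
  have hzj : z j = x j := by simp [hz, hji]
  have hzi : z i = !x i := by simp [hz]
  have hz'i : z' i = !x i := by simp [hz', hz, fun h : i = j => hij h]
  -- cards of filters vs s ∈ S are ≥ 2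
  have hcards : ∀ s ∈ S, 2 ≤ (univ.filter fun t => z t ≠ s t).card ∧
      2 ≤ (univ.filter fun t => z' t ≠ s t).card := by
    intro s hs
    have h1 := hDpos s hs
    have e1 : (univ.filter fun t => z t ≠ s t).card
        = if x i = s i then (D s).card + 1 else (D s).card - 1 := by
      simp only [hz, hD]; exact flip_card x s i
    have e2 : (univ.filter fun t => z' t ≠ s t).card
        = if z j = s j then (univ.filter fun t => z t ≠ s t).card + 1
          else (univ.filter fun t => z t ≠ s t).card - 1 := by
      simp only [hz']; exact flip_card z s j
    rw [hzj] at e2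
    by_cases h3 : (D s).card ≤ 3
    · obtain ⟨hxi, hxj⟩ := hsmall s hs h3
      rw [if_pos hxi] at e1
      rw [if_pos hxj, e1] at e2
      omega
    · split_ifs at e1 e2 <;> omega
  have hzS : z ∉ S := by
    intro hmem
    have := (hcards z hmem).1
    simp at this
  have hz'S : z' ∉ S := by
    intro hmem
    have := (hcards z' hmem).2
    simp at this
  have hzx : z ≠ x := by
    intro h
    have := congrFun h i
    rw [hzi] at this
    simp at this
  have hz'x : z' ≠ x := by
    intro h
    have := congrFun h i
    rw [hz'i] at this
    simp at this
  have hAdjxz : (cubeGraph (3*k+2)).Adj x z := by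
    show (univ.filter fun t => x t ≠ z t).card = 1
    have : (univ.filter fun t => x t ≠ z t) = {i} := by
      ext t
      by_cases ht : t = i
      · subst ht; simp [hzi]
      · simp [ht, hz]
    rw [this, card_singleton]
  have hAdjxz' : ¬ (cubeGraph (3*k+2)).Adj x z' := by
    show ¬ (univ.filter fun t => x t ≠ z' t).card = 1
    have : (univ.filter fun t => x t ≠ z' t) = {i, j} := by
      ext t
      by_cases ht : t = i
      · subst ht; simp [hz'i]
      · by_cases ht' : t = j
        · subst ht'; simp [hz', hzj]
        · simp [ht, ht', hz', hz]
    rw [this, card_insert_of_notMem (by simp [hij]), card_singleton]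
    omega
  have hNadj : ∀ s ∈ S, ¬ (cubeGraph (3*k+2)).Adj z s ∧ ¬ (cubeGraph (3*k+2)).Adj z' s := by
    intro s hs
    obtain ⟨c1, c2⟩ := hcards s hs
    constructor
    · show ¬ (univ.filter fun t => z t ≠ s t).card = 1
      omega
    · show ¬ (univ.filter fun t => z' t ≠ s t).card = 1
      omega
  have heq : (fun s : S => (cubeGraph (3*k+2)).Adj z ↑s) = fun s : S => (cubeGraph (3*k+2)).Adj z' ↑s := by
    funext s
    have h := hNadj s s.2
    simp only [eq_iff_iff]
    exact ⟨fun h1 => absurd h1 h.1, fun h2 => absurd h2 h.2⟩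
  have h1 := hf z hzx hzS
  have h2 := hf z' hz'x hz'S
  rw [heq] at h1
  exact hAdjxz' (h2.mpr (h1.mp hAdjxz))
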